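/- Fix a real constant η > 0. For a real number s > 0, the inequality α_ℓ < 1/(2σ²) holds for every integer ℓ ≥ 1 if and only if s ≤ 2η/σ². In other words, the intersection S_∞⁺ = ⋂_{n≥1} S_n⁺ equals the half-open interval (0, 2η/σ²]. -/
import Mathlib


open Finset

/-- The sequence `α_ℓ` from the paper: `α₁ = (σ²s² − 2ηs)/2` and
`α_ℓ = ([a² + 2σ²s(a+η)]·α_{ℓ−1} + α₁)/(1 − 2σ²α_{ℓ−1})` for `ℓ ≥ 2`. -/
noncomputable def alphaSeq (a σ η s : ℝ) : ℕ → ℝ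
  | 0 => 0
  | 1 => (σ ^ 2 * s ^ 2 - 2 * η * s) / 2
  | (ℓ + 2) =>
      ((a ^ 2 + 2 * σ ^ 2 * s * (a + η)) * alphaSeq a σ η s (ℓ + 1)
            + (σ ^ 2 * s ^ 2 - 2 * η * s) / 2)
        / (1 - 2 * σ ^ 2 * alphaSeq a σ η s (ℓ + 1))

theorem statement3 (a σ η : ℝ) (ha : 1 < a) (hσ : 0 < σ) (hη : 0 < η) :
    (∀ s : ℝ, 0 < s →
        ((∀ ℓ : ℕ, 1 ≤ ℓ → alphaSeq a σ η s ℓ < 1 / (2 * σ ^ 2)) ↔ s ≤ 2 * η / σ ^ 2)) ∧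
      {s : ℝ | 0 < s ∧ ∀ ℓ : ℕ, 1 ≤ ℓ → alphaSeq a σ η s ℓ < 1 / (2 * σ ^ 2)}
        = Set.Ioc 0 (2 * η / σ ^ 2) := by
  have hσ2 : (0:ℝ) < σ ^ 2 := by positivity
  have key : ∀ s : ℝ, 0 < s →
      ((∀ ℓ : ℕ, 1 ≤ ℓ → alphaSeq a σ η s ℓ < 1 / (2 * σ ^ 2)) ↔ s ≤ 2 * η / σ ^ 2) := by
    intro s hs
    constructor
    · intro hall
      by_contra hgt
      push_neg at hgt
      rw [div_lt_iff₀ hσ2] at hgt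
      have hc : 0 < (σ ^ 2 * s ^ 2 - 2 * η * s) / 2 := by nlinarith [sq_nonneg a, mul_pos (mul_pos hσ2 hs) (show (0:ℝ) < a + η by linarith)]
      set c := (σ ^ 2 * s ^ 2 - 2 * η * s) / 2 with hcdef
      have hA : (1:ℝ) ≤ a ^ 2 + 2 * σ ^ 2 * s * (a + η) := by nlinarith [sq_nonneg a, mul_pos (mul_pos hσ2 hs) (show (0:ℝ) < a + η by linarith)]
      have grow : ∀ ℓ : ℕ, ((ℓ + 1 : ℕ) : ℝ) * c ≤ alphaSeq a σ η s (ℓ + 1) := by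
        intro ℓ
        induction ℓ with
        | zero => simp [alphaSeq, hcdef]
        | succ n ih =>
          have hlt : alphaSeq a σ η s (n + 1) < 1 / (2 * σ ^ 2) := hall (n + 1) (by omega)
          have hppos : 0 < alphaSeq a σ η s (n + 1) := by
            have : (0:ℝ) < ((n + 1 : ℕ) : ℝ) * c := by positivity
            linarith
          have hden : 0 < 1 - 2 * σ ^ 2 * alphaSeq a σ η s (n + 1) := by
            rw [lt_div_iff₀ (by positivity)] at hlt
            nlinarith
          have hden1 : 1 - 2 * σ ^ 2 * alphaSeq a σ η s (n + 1) ≤ 1 := by nlinarith [sq_nonneg a, mul_pos (mul_pos hσ2 hs) (show (0:ℝ) < a + η by linarith)]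
          show ((n + 2 : ℕ) : ℝ) * c ≤ alphaSeq a σ η s (n + 2)
          rw [show alphaSeq a σ η s (n + 2) =
              ((a ^ 2 + 2 * σ ^ 2 * s * (a + η)) * alphaSeq a σ η s (n + 1) + c)
                / (1 - 2 * σ ^ 2 * alphaSeq a σ η s (n + 1)) from rfl]
          rw [le_div_iff₀ hden]
          have h1 : ((n + 1 : ℕ) : ℝ) * c ≤ alphaSeq a σ η s (n + 1) := ih
          push_cast at h1 ⊢
          nlinarith
      obtain ⟨n, hn⟩ := exists_nat_gt ((1 / (2 * σ ^ 2)) / c)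
      have h1 : 1 / (2 * σ ^ 2) < (n : ℝ) * c := by
        rw [div_lt_iff₀ hc] at hn; linarith
      have h2 : (n : ℝ) * c ≤ ((n + 1 : ℕ) : ℝ) * c := by
        push_cast
        nlinarith
      have h3 := grow n
      have h4 := hall (n + 1) (by omega)
      linarith
    · intro hle ℓ hℓ
      rw [le_div_iff₀ hσ2] at hle
      have hc0 : (σ ^ 2 * s ^ 2 - 2 * η * s) / 2 ≤ 0 := by nlinarith [sq_nonneg a, mul_pos (mul_pos hσ2 hs) (show (0:ℝ) < a + η by linarith)]
      have nonpos : ∀ m : ℕ, alphaSeq a σ η s m ≤ 0 := by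
        intro m
        induction m with
        | zero => simp [alphaSeq]
        | succ n ih =>
          cases n with
          | zero => simpa [alphaSeq] using hc0
          | succ k =>
            show alphaSeq a σ η s (k + 2) ≤ 0
            rw [show alphaSeq a σ η s (k + 2) =
                ((a ^ 2 + 2 * σ ^ 2 * s * (a + η)) * alphaSeq a σ η s (k + 1)
                  + (σ ^ 2 * s ^ 2 - 2 * η * s) / 2)
                / (1 - 2 * σ ^ 2 * alphaSeq a σ η s (k + 1)) from rfl]
            have hApos : (0:ℝ) < a ^ 2 + 2 * σ ^ 2 * s * (a + η) := by nlinarith [sq_nonneg a, mul_pos (mul_pos hσ2 hs) (show (0:ℝ) < a + η by linarith)]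
            apply div_nonpos_of_nonpos_of_nonneg
            · nlinarith [mul_nonpos_of_nonneg_of_nonpos hApos.le ih]
            · nlinarith [ih]
      calc alphaSeq a σ η s ℓ ≤ 0 := nonpos ℓ
        _ < 1 / (2 * σ ^ 2) := by positivity
  refine ⟨key, ?_⟩
  ext s
  simp only [Set.mem_setOf_eq, Set.mem_Ioc]
  constructor
  · rintro ⟨hs, h⟩
    exact ⟨hs, (key s hs).1 h⟩
  · rintro ⟨hs, h⟩
    exact ⟨hs, (key s hs).2 h⟩
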